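/- Consider a uniformly random permutation S of {1, 2, ..., N} arranged in a cycle (so S_1 and S_N are adjacent). Let M be the number of indices i such that S_i is smaller than both its cyclic neighbors. Then Pr[M ≤ (N-3)/18] ≤ 24/(N-3). -/

import Mathlib

open scoped Classical

/-- `i` is a cyclic local minimum of the permutation `S` of `{1,...,N}`
(represented as a bijection from cyclic positions `ZMod N` to values `Fin N`):
`S i` is smaller than both of its cyclic neighbours. -/
def isCycLocalMin {N : ℕ} [NeZero N] (S : ZMod N ≃ Fin N) (i : ZMod N) : Prop :=
  S i < S (i - 1) ∧ S i < S (i + 1)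

/-- The number of cyclic local minima of the permutation `S`. -/
noncomputable def localMinCount (N : ℕ) [NeZero N] (S : ZMod N ≃ Fin N) : ℕ :=
  (Finset.univ.filter fun i : ZMod N => isCycLocalMin S i).card

namespace LocalMinAux

open Finset

variable {N : ℕ} [NeZero N]

private lemma min3tot {α : Type*} [LinearOrder α] {x y z : α} (hxy : x ≠ y) (hxz : x ≠ z)
    (hyz : y ≠ z) :
    (x < y ∧ x < z) ∨ (y < x ∧ y < z) ∨ (z < x ∧ z < y) := by
  rcases lt_trichotomy x y with h|h|h
  · rcases lt_trichotomy x z with h'|h'|h'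
    · exact Or.inl ⟨h, h'⟩
    · exact absurd h' hxz
    · exact Or.inr (Or.inr ⟨h', h'.trans h⟩)
  · exact absurd h hxy
  · rcases lt_trichotomy y z with h'|h'|h'
    · exact Or.inr (Or.inl ⟨h, h'⟩)
    · exact absurd h' hyz
    · exact Or.inr (Or.inr ⟨h'.trans h, h'⟩)

private lemma card_bij_comp (ρ : Equiv.Perm (ZMod N)) (P Q : (ZMod N ≃ Fin N) → Prop)
    [DecidablePred P] [DecidablePred Q]
    (h : ∀ S : ZMod N ≃ Fin N, P S ↔ Q (ρ.trans S)) :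
    ((univ : Finset (ZMod N ≃ Fin N)).filter P).card = (univ.filter Q).card := by
  refine Finset.card_bij' (fun S _ => ρ.trans S) (fun S _ => ρ.symm.trans S) ?_ ?_ ?_ ?_
  · intro S hS
    simp only [mem_filter, mem_univ, true_and] at hS ⊢
    exact (h S).mp hS
  · intro S hS
    simp only [mem_filter, mem_univ, true_and] at hS ⊢
    have e : ρ.trans (ρ.symm.trans S) = S := by ext x; simp
    rw [h (ρ.symm.trans S), e]
    exact hS
  · intro S _; ext x; simp
  · intro S _; ext x; simp

private lemma half (a b : ZMod N) (hab : a ≠ b) (Q : (ZMod N ≃ Fin N) → Prop)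
    [DecidablePred Q]
    [DecidablePred fun S : ZMod N ≃ Fin N => S b < S a ∧ Q S]
    [DecidablePred fun S : ZMod N ≃ Fin N => S a < S b ∧ Q S]
    (hQ : ∀ S, Q ((Equiv.swap a b).trans S) ↔ Q S) :
    2 * ((univ : Finset (ZMod N ≃ Fin N)).filter fun S => S b < S a ∧ Q S).card
      = (univ.filter Q).card := by
  have h1 : ((univ : Finset (ZMod N ≃ Fin N)).filter fun S => S a < S b ∧ Q S).card
      = (univ.filter fun S => S b < S a ∧ Q S).card := by
    apply card_bij_comp (Equiv.swap a b)
    intro S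
    simp only [Equiv.trans_apply, Equiv.swap_apply_left, Equiv.swap_apply_right, hQ]
  have hu : ((univ : Finset (ZMod N ≃ Fin N)).filter fun S => S b < S a ∧ Q S)
      ∪ (univ.filter fun S => S a < S b ∧ Q S) = univ.filter Q := by
    ext S
    simp only [Finset.mem_union, Finset.mem_filter, Finset.mem_univ, true_and]
    constructor
    · rintro (⟨_, h⟩|⟨_, h⟩) <;> exact h
    · intro hq
      have hne : S a ≠ S b := fun h => hab (S.injective h)
      rcases hne.lt_or_gt with h|h
      · exact Or.inr ⟨h, hq⟩
      · exact Or.inl ⟨h, hq⟩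
  have hd : Disjoint ((univ : Finset (ZMod N ≃ Fin N)).filter fun S => S b < S a ∧ Q S)
      (univ.filter fun S => S a < S b ∧ Q S) := by
    rw [Finset.disjoint_left]
    intro S hS hS'
    simp only [Finset.mem_filter, Finset.mem_univ, true_and] at hS hS'
    exact lt_asymm hS.1 hS'.1
  have := Finset.card_union_of_disjoint hd
  rw [hu] at this
  omega

private lemma third (a b c : ZMod N) (hab : a ≠ b) (hac : a ≠ c) (hbc : b ≠ c)
    (Q : (ZMod N ≃ Fin N) → Prop) [DecidablePred Q]
    [DecidablePred fun S : ZMod N ≃ Fin N => (S b < S a ∧ S b < S c) ∧ Q S]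
    (hQ1 : ∀ S, Q ((Equiv.swap a b).trans S) ↔ Q S)
    (hQ2 : ∀ S, Q ((Equiv.swap b c).trans S) ↔ Q S) :
    3 * ((univ : Finset (ZMod N ≃ Fin N)).filter fun S => (S b < S a ∧ S b < S c) ∧ Q S).card
      = (univ.filter Q).card := by
  classical
  have hA : ((univ : Finset (ZMod N ≃ Fin N)).filter fun S => (S a < S b ∧ S a < S c) ∧ Q S).card
      = (univ.filter fun S => (S b < S a ∧ S b < S c) ∧ Q S).card := by
    apply card_bij_comp (Equiv.swap a b)
    intro S
    simp only [Equiv.trans_apply, Equiv.swap_apply_left, Equiv.swap_apply_right,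
      Equiv.swap_apply_of_ne_of_ne hac.symm hbc.symm, hQ1]
  have hC : ((univ : Finset (ZMod N ≃ Fin N)).filter fun S => (S c < S a ∧ S c < S b) ∧ Q S).card
      = (univ.filter fun S => (S b < S a ∧ S b < S c) ∧ Q S).card := by
    apply card_bij_comp (Equiv.swap b c)
    intro S
    have ha : Equiv.swap b c a = a := Equiv.swap_apply_of_ne_of_ne hab hac
    simp only [Equiv.trans_apply, Equiv.swap_apply_left, Equiv.swap_apply_right, ha, hQ2]
    try tauto
  have hu : (((univ : Finset (ZMod N ≃ Fin N)).filter fun S => (S b < S a ∧ S b < S c) ∧ Q S)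
      ∪ ((univ.filter fun S => (S a < S b ∧ S a < S c) ∧ Q S)
        ∪ (univ.filter fun S => (S c < S a ∧ S c < S b) ∧ Q S))) = univ.filter Q := by
    ext S
    simp only [Finset.mem_union, Finset.mem_filter, Finset.mem_univ, true_and]
    constructor
    · rintro (⟨_, h⟩|⟨_, h⟩|⟨_, h⟩) <;> exact h
    · intro hq
      have hne_ab : S a ≠ S b := fun h => hab (S.injective h)
      have hne_ac : S a ≠ S c := fun h => hac (S.injective h)
      have hne_bc : S b ≠ S c := fun h => hbc (S.injective h)
      rcases min3tot hne_ab hne_ac hne_bc with h|h|h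
      · exact Or.inr (Or.inl ⟨h, hq⟩)
      · exact Or.inl ⟨h, hq⟩
      · exact Or.inr (Or.inr ⟨h, hq⟩)
  have hd2 : Disjoint ((univ : Finset (ZMod N ≃ Fin N)).filter
        fun S => (S a < S b ∧ S a < S c) ∧ Q S)
      (univ.filter fun S => (S c < S a ∧ S c < S b) ∧ Q S) := by
    rw [Finset.disjoint_left]
    intro S hS hS'
    simp only [Finset.mem_filter, Finset.mem_univ, true_and] at hS hS'
    exact lt_asymm hS.1.2 hS'.1.1
  have hd1 : Disjoint ((univ : Finset (ZMod N ≃ Fin N)).filter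
        fun S => (S b < S a ∧ S b < S c) ∧ Q S)
      ((univ.filter fun S => (S a < S b ∧ S a < S c) ∧ Q S)
        ∪ (univ.filter fun S => (S c < S a ∧ S c < S b) ∧ Q S)) := by
    rw [Finset.disjoint_left]
    intro S hS hS'
    simp only [Finset.mem_union, Finset.mem_filter, Finset.mem_univ, true_and] at hS hS'
    rcases hS' with h|h
    · exact lt_asymm hS.1.1 h.1.1
    · exact lt_asymm hS.1.2 h.1.2
  have key := Finset.card_union_of_disjoint hd1
  rw [hu, Finset.card_union_of_disjoint hd2] at key
  omega

private lemma zne (hN : 28 ≤ N) {k : ℕ} (hk : 0 < k) (hk2 : k < 28) : ((k : ℕ) : ZMod N) ≠ 0 := by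
  rw [Ne, ZMod.natCast_eq_zero_iff]
  intro h
  have := Nat.le_of_dvd hk h
  omega

private lemma zne1 (hN : 28 ≤ N) : (1 : ZMod N) ≠ 0 := by
  have := zne (N := N) hN (k := 1) (by norm_num) (by norm_num); simpa using this
private lemma zne2 (hN : 28 ≤ N) : (2 : ZMod N) ≠ 0 := by
  have := zne (N := N) hN (k := 2) (by norm_num) (by norm_num); simpa using this
private lemma zne3 (hN : 28 ≤ N) : (3 : ZMod N) ≠ 0 := by
  have := zne (N := N) hN (k := 3) (by norm_num) (by norm_num); simpa using this
private lemma zne4 (hN : 28 ≤ N) : (4 : ZMod N) ≠ 0 := by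
  have := zne (N := N) hN (k := 4) (by norm_num) (by norm_num); simpa using this

private lemma cOne (hN : 28 ≤ N) (i : ZMod N) :
    3 * ((univ : Finset (ZMod N ≃ Fin N)).filter fun S => isCycLocalMin S i).card
      = (univ : Finset (ZMod N ≃ Fin N)).card := by
  have h := third (i - 1) i (i + 1)
    (by intro h; exact zne1 hN (by linear_combination -h))
    (by intro h; exact zne2 hN (by linear_combination -h))
    (by intro h; exact zne1 hN (by linear_combination -h))
    (fun _ => True) (fun _ => Iff.rfl) (fun _ => Iff.rfl)
  have e : ((univ : Finset (ZMod N ≃ Fin N)).filter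
        fun S => (S i < S (i - 1) ∧ S i < S (i + 1)) ∧ True)
      = (univ.filter fun S => isCycLocalMin S i) := by
    apply Finset.filter_congr
    intro S _
    simp [isCycLocalMin]
  have e2 : ((univ : Finset (ZMod N ≃ Fin N)).filter fun _ => True)
      = (univ : Finset (ZMod N ≃ Fin N)) := by
    simp
  rw [e, e2] at h
  exact h

private lemma cAdjR (i : ZMod N) :
    ((univ : Finset (ZMod N ≃ Fin N)).filter
      fun S => isCycLocalMin S i ∧ isCycLocalMin S (i + 1)).card = 0 := by
  rw [Finset.card_eq_zero, Finset.eq_empty_iff_forall_notMem]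
  intro S hS
  rw [Finset.mem_filter] at hS
  simp only [Finset.mem_univ, true_and, isCycLocalMin] at hS
  have e : i + 1 - 1 = i := by ring
  rw [e] at hS
  exact lt_asymm hS.1.2 hS.2.1

private lemma cAdjL (i : ZMod N) :
    ((univ : Finset (ZMod N ≃ Fin N)).filter
      fun S => isCycLocalMin S i ∧ isCycLocalMin S (i - 1)).card = 0 := by
  rw [Finset.card_eq_zero, Finset.eq_empty_iff_forall_notMem]
  intro S hS
  rw [Finset.mem_filter] at hS
  simp only [Finset.mem_univ, true_and, isCycLocalMin] at hS
  have e : i - 1 + 1 = i := by ring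
  rw [e] at hS
  exact lt_asymm hS.1.1 hS.2.2

private lemma quarter (a b c d : ZMod N) (hab : a ≠ b) (hca : c ≠ a) (hcb : c ≠ b)
    (hda : d ≠ a) (hdb : d ≠ b) (hcd : c ≠ d) :
    4 * ((univ : Finset (ZMod N ≃ Fin N)).filter fun S => S b < S a ∧ S d < S c).card
      = (univ : Finset (ZMod N ≃ Fin N)).card := by
  have h1 := half a b hab (fun S => S d < S c)
    (fun S => by
      simp only [Equiv.trans_apply, Equiv.swap_apply_of_ne_of_ne hca hcb,
        Equiv.swap_apply_of_ne_of_ne hda hdb])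
  have h2 := half c d hcd (fun _ => True) (fun _ => Iff.rfl)
  have e : ((univ : Finset (ZMod N ≃ Fin N)).filter fun S => S d < S c ∧ True)
      = (univ.filter fun S => S d < S c) := by
    apply Finset.filter_congr; intro S _; simp
  have e2 : ((univ : Finset (ZMod N ≃ Fin N)).filter fun _ => True)
      = (univ : Finset (ZMod N ≃ Fin N)) := by simp
  rw [e, e2] at h2
  beta_reduce at h1
  omega

private lemma cTwoR (hN : 28 ≤ N) (i : ZMod N) :
    4 * ((univ : Finset (ZMod N ≃ Fin N)).filter
      fun S => isCycLocalMin S i ∧ isCycLocalMin S (i + 2)).card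
      ≤ (univ : Finset (ZMod N ≃ Fin N)).card := by
  have h := quarter (i - 1) i (i + 3) (i + 2)
    (by intro h; exact zne1 hN (by linear_combination -h))
    (by intro h; exact zne4 hN (by linear_combination h))
    (by intro h; exact zne3 hN (by linear_combination h))
    (by intro h; exact zne3 hN (by linear_combination h))
    (by intro h; exact zne2 hN (by linear_combination h))
    (by intro h; exact zne1 hN (by linear_combination h))
  rw [← h]
  have hsub : ((univ : Finset (ZMod N ≃ Fin N)).filter
        fun S => isCycLocalMin S i ∧ isCycLocalMin S (i + 2))
      ⊆ (univ.filter fun S => S i < S (i - 1) ∧ S (i + 2) < S (i + 3)) := by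
    intro S hS
    rw [Finset.mem_filter] at hS ⊢
    simp only [Finset.mem_univ, true_and, isCycLocalMin] at hS ⊢
    have e : i + 2 + 1 = i + 3 := by ring
    rw [e] at hS
    exact ⟨hS.1.1, hS.2.2⟩
  exact Nat.mul_le_mul_left 4 (Finset.card_le_card hsub)

private lemma cTwoL (hN : 28 ≤ N) (i : ZMod N) :
    4 * ((univ : Finset (ZMod N ≃ Fin N)).filter
      fun S => isCycLocalMin S i ∧ isCycLocalMin S (i - 2)).card
      ≤ (univ : Finset (ZMod N ≃ Fin N)).card := by
  have h := quarter (i + 1) i (i - 3) (i - 2)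
    (by intro h; exact zne1 hN (by linear_combination h))
    (by intro h; exact zne4 hN (by linear_combination -h))
    (by intro h; exact zne3 hN (by linear_combination -h))
    (by intro h; exact zne3 hN (by linear_combination -h))
    (by intro h; exact zne2 hN (by linear_combination -h))
    (by intro h; exact zne1 hN (by linear_combination -h))
  rw [← h]
  have hsub : ((univ : Finset (ZMod N ≃ Fin N)).filter
        fun S => isCycLocalMin S i ∧ isCycLocalMin S (i - 2))
      ⊆ (univ.filter fun S => S i < S (i + 1) ∧ S (i - 2) < S (i - 3)) := by
    intro S hS
    rw [Finset.mem_filter] at hS ⊢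
    simp only [Finset.mem_univ, true_and, isCycLocalMin] at hS ⊢
    have e : i - 2 - 1 = i - 3 := by ring
    rw [e] at hS
    exact ⟨hS.1.2, hS.2.1⟩
  exact Nat.mul_le_mul_left 4 (Finset.card_le_card hsub)

private lemma cNine (hN : 28 ≤ N) (i j : ZMod N)
    (h0 : j ≠ i) (hp1 : j ≠ i + 1) (hm1 : j ≠ i - 1) (hp2 : j ≠ i + 2) (hm2 : j ≠ i - 2) :
    9 * ((univ : Finset (ZMod N ≃ Fin N)).filter
      fun S => isCycLocalMin S i ∧ isCycLocalMin S j).card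
      = (univ : Finset (ZMod N ≃ Fin N)).card := by
  have nm1m1 : i - 1 ≠ j - 1 := fun h => h0 (by linear_combination -h)
  have nm1j : i - 1 ≠ j := fun h => hm1 (by linear_combination -h)
  have nm1p1 : i - 1 ≠ j + 1 := fun h => hm2 (by linear_combination -h)
  have nim1 : i ≠ j - 1 := fun h => hp1 (by linear_combination -h)
  have nij : i ≠ j := fun h => h0 (by linear_combination -h)
  have nip1 : i ≠ j + 1 := fun h => hm1 (by linear_combination -h)
  have np1m1 : i + 1 ≠ j - 1 := fun h => hp2 (by linear_combination -h)
  have np1j : i + 1 ≠ j := fun h => hp1 (by linear_combination -h)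
  have np1p1 : i + 1 ≠ j + 1 := fun h => h0 (by linear_combination -h)
  have hQinv1 : ∀ S : ZMod N ≃ Fin N,
      isCycLocalMin ((Equiv.swap (j - 1) j).trans S) i ↔ isCycLocalMin S i := by
    intro S
    simp only [isCycLocalMin, Equiv.trans_apply,
      Equiv.swap_apply_of_ne_of_ne nm1m1 nm1j,
      Equiv.swap_apply_of_ne_of_ne nim1 nij,
      Equiv.swap_apply_of_ne_of_ne np1m1 np1j]
  have hQinv2 : ∀ S : ZMod N ≃ Fin N,
      isCycLocalMin ((Equiv.swap j (j + 1)).trans S) i ↔ isCycLocalMin S i := by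
    intro S
    simp only [isCycLocalMin, Equiv.trans_apply,
      Equiv.swap_apply_of_ne_of_ne nm1j nm1p1,
      Equiv.swap_apply_of_ne_of_ne nij nip1,
      Equiv.swap_apply_of_ne_of_ne np1j np1p1]
  have h := third (j - 1) j (j + 1)
    (by intro h; exact zne1 hN (by linear_combination -h))
    (by intro h; exact zne2 hN (by linear_combination -h))
    (by intro h; exact zne1 hN (by linear_combination -h))
    (fun S => isCycLocalMin S i) hQinv1 hQinv2
  have e : ((univ : Finset (ZMod N ≃ Fin N)).filter
        fun S => (S j < S (j - 1) ∧ S j < S (j + 1)) ∧ isCycLocalMin S i)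
      = (univ.filter fun S => isCycLocalMin S i ∧ isCycLocalMin S j) := by
    apply Finset.filter_congr
    intro S _
    simp only [isCycLocalMin]
    tauto
  rw [e] at h
  have h2 := cOne hN i
  omega

private lemma sum1 (hN : 28 ≤ N) :
    3 * ∑ S : ZMod N ≃ Fin N, localMinCount N S
      = N * (univ : Finset (ZMod N ≃ Fin N)).card := by
  have hswap : ∑ S : ZMod N ≃ Fin N, localMinCount N S
      = ∑ i : ZMod N, ((univ : Finset (ZMod N ≃ Fin N)).filter
          fun S => isCycLocalMin S i).card := by
    calc ∑ S : ZMod N ≃ Fin N, localMinCount N S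
        = ∑ S : ZMod N ≃ Fin N, ∑ i : ZMod N, if isCycLocalMin S i then 1 else 0 :=
          Finset.sum_congr rfl fun S _ => Finset.card_filter _ _
      _ = ∑ i : ZMod N, ∑ S : ZMod N ≃ Fin N, if isCycLocalMin S i then 1 else 0 :=
          Finset.sum_comm
      _ = ∑ i : ZMod N, ((univ : Finset (ZMod N ≃ Fin N)).filter
            fun S => isCycLocalMin S i).card :=
          Finset.sum_congr rfl fun i _ => (Finset.card_filter _ _).symm
  rw [hswap, Finset.mul_sum]
  rw [Finset.sum_congr rfl fun i _ => cOne hN i]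
  rw [Finset.sum_const, Finset.card_univ, ZMod.card, smul_eq_mul]

private lemma ite_pair' (p q : Prop) (d1 : Decidable p) (d2 : Decidable q)
    (d3 : Decidable (p ∧ q)) :
    (@ite ℕ p d1 1 0) * (@ite ℕ q d2 1 0) = @ite ℕ (p ∧ q) d3 1 0 := by
  by_cases hp : p
  · by_cases hq : q
    · rw [if_pos hp, if_pos hq, if_pos ⟨hp, hq⟩]
    · rw [if_neg hq, mul_zero, if_neg (fun hc : p ∧ q => hq hc.2)]
  · rw [if_neg hp, zero_mul, if_neg (fun hc : p ∧ q => hp hc.1)]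

private lemma sum2swap :
    ∑ S : ZMod N ≃ Fin N, (localMinCount N S)^2
      = ∑ i : ZMod N, ∑ j : ZMod N, ((univ : Finset (ZMod N ≃ Fin N)).filter
          fun S => isCycLocalMin S i ∧ isCycLocalMin S j).card := by
  have hM2 : ∀ S : ZMod N ≃ Fin N, (localMinCount N S)^2
      = ∑ i : ZMod N, ∑ j : ZMod N,
          if isCycLocalMin S i ∧ isCycLocalMin S j then 1 else 0 := by
    intro S
    rw [sq, localMinCount, Finset.card_filter, Finset.sum_mul_sum]
    exact Finset.sum_congr rfl fun i _ => Finset.sum_congr rfl fun j _ =>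
      ite_pair' _ _ _ _ _
  rw [Finset.sum_congr rfl fun S _ => hM2 S]
  rw [Finset.sum_comm]
  refine Finset.sum_congr rfl fun i _ => ?_
  rw [Finset.sum_comm]
  exact Finset.sum_congr rfl fun j _ => (Finset.card_filter _ _).symm

private lemma rowBound (hN : 28 ≤ N) (i : ZMod N) :
    36 * ∑ j : ZMod N, ((univ : Finset (ZMod N ≃ Fin N)).filter
        fun S => isCycLocalMin S i ∧ isCycLocalMin S j).card
      ≤ (4 * N + 10) * (univ : Finset (ZMod N ≃ Fin N)).card := by
  set T := (univ : Finset (ZMod N ≃ Fin N)).card with hT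
  set f : ZMod N → ℕ := fun j => ((univ : Finset (ZMod N ≃ Fin N)).filter
      fun S => isCycLocalMin S i ∧ isCycLocalMin S j).card with hf
  have d1 : i - 2 ≠ i - 1 := fun h => zne1 hN (by linear_combination -h)
  have d2 : i - 2 ≠ i := fun h => zne2 hN (by linear_combination -h)
  have d3 : i - 2 ≠ i + 1 := fun h => zne3 hN (by linear_combination -h)
  have d4 : i - 2 ≠ i + 2 := fun h => zne4 hN (by linear_combination -h)
  have d5 : i - 1 ≠ i := fun h => zne1 hN (by linear_combination -h)
  have d6 : i - 1 ≠ i + 1 := fun h => zne2 hN (by linear_combination -h)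
  have d7 : i - 1 ≠ i + 2 := fun h => zne3 hN (by linear_combination -h)
  have d8 : i ≠ i + 1 := fun h => zne1 hN (by linear_combination -h)
  have d9 : i ≠ i + 2 := fun h => zne2 hN (by linear_combination -h)
  have d10 : i + 1 ≠ i + 2 := fun h => zne1 hN (by linear_combination -h)
  set s : Finset (ZMod N) := {i - 2, i - 1, i, i + 1, i + 2} with hs
  have hcard_s : s.card = 5 := by
    rw [hs]
    rw [Finset.card_insert_of_notMem (by simp [d1, d2, d3, d4]),
      Finset.card_insert_of_notMem (by simp [d5, d6, d7]),
      Finset.card_insert_of_notMem (by simp [d8, d9]),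
      Finset.card_insert_of_notMem (by simp [d10]),
      Finset.card_singleton]
  have hsplit : ∑ j : ZMod N, f j = (∑ j ∈ s, f j) + ∑ j ∈ sᶜ, f j :=
    (Finset.sum_add_sum_compl s f).symm
  have hsum_s : ∑ j ∈ s, f j
      = f (i - 2) + (f (i - 1) + (f i + (f (i + 1) + f (i + 2)))) := by
    rw [hs]
    rw [Finset.sum_insert (by simp [d1, d2, d3, d4]),
      Finset.sum_insert (by simp [d5, d6, d7]),
      Finset.sum_insert (by simp [d8, d9]),
      Finset.sum_insert (by simp [d10]),
      Finset.sum_singleton]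
  have hfm2 : 4 * f (i - 2) ≤ T := cTwoL hN i
  have hfm1 : f (i - 1) = 0 := cAdjL i
  have hfi : 3 * f i = T := by
    have h := cOne hN i
    have e : ((univ : Finset (ZMod N ≃ Fin N)).filter
          fun S => isCycLocalMin S i ∧ isCycLocalMin S i)
        = (univ.filter fun S => isCycLocalMin S i) := by
      apply Finset.filter_congr; intro S _; tauto
    rw [hf]; beta_reduce; rw [e]; exact h
  have hfp1 : f (i + 1) = 0 := cAdjR i
  have hfp2 : 4 * f (i + 2) ≤ T := cTwoR hN i
  have hfar : ∀ j ∈ sᶜ, 9 * f j = T := by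
    intro j hj
    simp only [Finset.mem_compl, hs, Finset.mem_insert, Finset.mem_singleton, not_or] at hj
    obtain ⟨e1, e2, e3, e4, e5⟩ := hj
    exact cNine hN i j e3 e4 e2 e5 e1
  have hsum_c : 9 * ∑ j ∈ sᶜ, f j = sᶜ.card * T := by
    rw [Finset.mul_sum, Finset.sum_congr rfl hfar, Finset.sum_const, smul_eq_mul]
  have hcard_c : sᶜ.card = N - 5 := by
    rw [Finset.card_compl, hcard_s, ZMod.card]
  rw [hcard_c] at hsum_c
  have expand : (N - 5) * T = N * T - 5 * T := Nat.sub_mul N 5 T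
  rw [expand] at hsum_c
  have h5T : 5 * T ≤ N * T := Nat.mul_le_mul_right T (by omega)
  have hgoal : (4 * N + 10) * T = 4 * (N * T) + 10 * T := by ring
  rw [hgoal, hsplit]
  have carry : 36 * (∑ j ∈ s, f j) ≤ 30 * T := by
    rw [hsum_s]; omega
  omega

private lemma sum2 (hN : 28 ≤ N) :
    36 * ∑ S : ZMod N ≃ Fin N, (localMinCount N S)^2
      ≤ (4 * N ^ 2 + 10 * N) * (univ : Finset (ZMod N ≃ Fin N)).card := by
  rw [sum2swap, Finset.mul_sum]
  calc ∑ i : ZMod N, 36 * ∑ j : ZMod N, ((univ : Finset (ZMod N ≃ Fin N)).filter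
          fun S => isCycLocalMin S i ∧ isCycLocalMin S j).card
      ≤ ∑ _i : ZMod N, (4 * N + 10) * (univ : Finset (ZMod N ≃ Fin N)).card :=
        Finset.sum_le_sum fun i _ => rowBound hN i
    _ = N * ((4 * N + 10) * (univ : Finset (ZMod N ≃ Fin N)).card) := by
        rw [Finset.sum_const, Finset.card_univ, ZMod.card, smul_eq_mul]
    _ = (4 * N ^ 2 + 10 * N) * (univ : Finset (ZMod N ≃ Fin N)).card := by ring

end LocalMinAux

/-- For a uniformly random cyclic permutation of `{1,...,N}` with `N ≥ 4`, the number `M`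
of cyclic local minima satisfies `Pr[M ≤ (N-3)/18] ≤ 24/(N-3)`. -/
theorem localMin_count_lower_tail (N : ℕ) [NeZero N] (hN : 4 ≤ N) :
    ((Finset.univ.filter fun S : ZMod N ≃ Fin N =>
        (localMinCount N S : ℝ) ≤ ((N : ℝ) - 3) / 18).card : ℝ) /
      (Fintype.card (ZMod N ≃ Fin N)) ≤ 24 / ((N : ℝ) - 3) := by
  classical
  have hTpos : 0 < Fintype.card (ZMod N ≃ Fin N) :=
    Fintype.card_pos_iff.mpr ⟨(Fintype.equivFin (ZMod N)).trans (finCongr (ZMod.card N))⟩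
  have hTpos' : (0 : ℝ) < (Fintype.card (ZMod N ≃ Fin N) : ℝ) := by exact_mod_cast hTpos
  have hN3 : (0 : ℝ) < (N : ℝ) - 3 := by
    have h4 : (4 : ℝ) ≤ (N : ℝ) := by exact_mod_cast hN
    linarith
  set bad := (Finset.univ.filter fun S : ZMod N ≃ Fin N =>
      (localMinCount N S : ℝ) ≤ ((N : ℝ) - 3) / 18) with hbad
  have hBle : bad.card ≤ Fintype.card (ZMod N ≃ Fin N) := by
    rw [← Finset.card_univ]; exact Finset.card_filter_le _ _
  rw [div_le_div_iff₀ hTpos' hN3]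
  by_cases hbig : 28 ≤ N
  · -- Chebyshev's inequality
    set T : ℝ := (Fintype.card (ZMod N ≃ Fin N) : ℝ) with hTdef
    have hs1 := LocalMinAux.sum1 (N := N) hbig
    have hs2 := LocalMinAux.sum2 (N := N) hbig
    rw [Finset.card_univ] at hs1 hs2
    have hM1 : 3 * ∑ S : ZMod N ≃ Fin N, (localMinCount N S : ℝ) = (N : ℝ) * T := by
      have := congrArg (fun n : ℕ => (n : ℝ)) hs1
      push_cast at this
      exact this
    have hM2 : 36 * ∑ S : ZMod N ≃ Fin N, ((localMinCount N S : ℝ))^2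
        ≤ (4 * (N : ℝ)^2 + 10 * N) * T := by
      have := (Nat.cast_le (α := ℝ)).mpr hs2
      push_cast at this
      exact this
    have expand : ∑ S : ZMod N ≃ Fin N, ((N : ℝ)/3 - (localMinCount N S : ℝ))^2
        = (N : ℝ)^2/9 * T - 2*(N : ℝ)/3 * (∑ S : ZMod N ≃ Fin N, (localMinCount N S : ℝ))
          + ∑ S : ZMod N ≃ Fin N, ((localMinCount N S : ℝ))^2 := by
      have e : ∀ S ∈ (Finset.univ : Finset (ZMod N ≃ Fin N)),
          ((N : ℝ)/3 - (localMinCount N S : ℝ))^2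
            = (N : ℝ)^2/9 - 2*(N : ℝ)/3 * (localMinCount N S : ℝ)
              + ((localMinCount N S : ℝ))^2 := fun S _ => by ring
      rw [Finset.sum_congr rfl e, Finset.sum_add_distrib, Finset.sum_sub_distrib,
        Finset.sum_const, ← Finset.mul_sum, Finset.card_univ, nsmul_eq_mul]
      ring
    have upper : ∑ S : ZMod N ≃ Fin N, ((N : ℝ)/3 - (localMinCount N S : ℝ))^2
        ≤ 5 * (N : ℝ) / 18 * T := by
      rw [expand]
      nlinarith [hM1, hM2]
    have lower : (bad.card : ℝ) * (((5 * (N : ℝ) + 3)/18))^2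
        ≤ ∑ S : ZMod N ≃ Fin N, ((N : ℝ)/3 - (localMinCount N S : ℝ))^2 := by
      have step1 : (bad.card : ℝ) * (((5 * (N : ℝ) + 3)/18))^2
          ≤ ∑ S ∈ bad, ((N : ℝ)/3 - (localMinCount N S : ℝ))^2 := by
        rw [← nsmul_eq_mul]
        apply Finset.card_nsmul_le_sum
        intro S hS
        rw [hbad, Finset.mem_filter] at hS
        have hMS : (localMinCount N S : ℝ) ≤ ((N : ℝ) - 3)/18 := hS.2
        have hbase : (5 * (N : ℝ) + 3)/18 ≤ (N : ℝ)/3 - (localMinCount N S : ℝ) := by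
          linarith
        have hpos : (0 : ℝ) ≤ (5 * (N : ℝ) + 3)/18 := by positivity
        exact pow_le_pow_left₀ hpos hbase 2
      refine step1.trans ?_
      apply Finset.sum_le_sum_of_subset_of_nonneg (Finset.filter_subset _ _)
      intro S _ _
      exact sq_nonneg _
    -- combine
    have key : (bad.card : ℝ) * ((5 * (N : ℝ) + 3)/18)^2 ≤ 5 * (N : ℝ) / 18 * T :=
      lower.trans upper
    have hB0 : (0 : ℝ) ≤ (bad.card : ℝ) := Nat.cast_nonneg _
    have hN0 : (0 : ℝ) < (N : ℝ) := by positivity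
    have hN28 : (28 : ℝ) ≤ (N : ℝ) := by exact_mod_cast hbig
    have hT0 : (0 : ℝ) ≤ T := le_of_lt hTpos'
    have final : ∀ x t : ℝ, 0 ≤ x → 0 ≤ t →
        x * ((5 * (N : ℝ) + 3)/18)^2 ≤ 5 * (N : ℝ) / 18 * t → x * ((N : ℝ) - 3) ≤ 24 * t := by
      intro x t hx ht hkey
      have goal2 : x * (N : ℝ)^2 - 3 * x * (N : ℝ) ≤ 24 * (N : ℝ) * t := by
        nlinarith [hkey, mul_nonneg hx hN0.le, hx, mul_nonneg hN0.le ht]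
      have h3 : (x * ((N : ℝ) - 3)) * (N : ℝ) ≤ (24 * t) * (N : ℝ) := by nlinarith [goal2]
      exact (mul_le_mul_iff_left₀ hN0).mp h3
    exact final _ _ hB0 hT0 key
  · -- trivial bound for small N
    push_neg at hbig
    have hNle : (N : ℝ) ≤ 27 := by exact_mod_cast Nat.le_of_lt_succ hbig
    have hBR : (bad.card : ℝ) ≤ (Fintype.card (ZMod N ≃ Fin N) : ℝ) := by exact_mod_cast hBle
    have hB0 : (0 : ℝ) ≤ (bad.card : ℝ) := Nat.cast_nonneg _
    nlinarith [hBR, hB0, hTpos', hN3, hNle]
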